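/- Let K ⊂ ℝ^N be compact and r a real-valued C² function on an open neighborhood of K. Then there exists c > 0 such that for every y ∈ K there is an index m ∈ {1, …, N} with the property that for every x ∈ K with |x − y| ≤ c |∇r(y)| one has |∂r/∂x_m (x)| ≥ |∇r(y)|/(2√N); in particular |∇r(x)| ≥ |∇r(y)|/(2√N) for all such x. -/

import Mathlib

lemma schmalz_exists_index (N : ℕ) (hN : 0 < N)
    (f : EuclideanSpace ℝ (Fin N) →L[ℝ] ℝ) :
    ∃ m : Fin N, ‖f‖ ≤ Real.sqrt N * |f (EuclideanSpace.single m 1)| := by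
  haveI : Nonempty (Fin N) := ⟨⟨0, hN⟩⟩
  set v : EuclideanSpace ℝ (Fin N) :=
    (InnerProductSpace.toDual ℝ (EuclideanSpace ℝ (Fin N))).symm f with hv
  have hvi : ∀ i, f (EuclideanSpace.single i 1) = v i := by
    intro i
    rw [← InnerProductSpace.toDual_symm_apply (y := f) (x := EuclideanSpace.single i 1)]
    rw [← hv, EuclideanSpace.inner_single_right]
    simp
  have hnorm : ‖f‖ = ‖v‖ := by
    rw [hv]
    exact ((InnerProductSpace.toDual ℝ _).symm.norm_map f).symm
  obtain ⟨m, -, hm⟩ := Finset.exists_max_image Finset.univ (fun i => |v i|)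
    Finset.univ_nonempty
  refine ⟨m, ?_⟩
  rw [hnorm, hvi, EuclideanSpace.norm_eq]
  have h1 : (∑ i : Fin N, ‖v i‖ ^ 2) ≤ N * |v m| ^ 2 := by
    calc (∑ i : Fin N, ‖v i‖ ^ 2) ≤ ∑ _i : Fin N, |v m| ^ 2 := by
          apply Finset.sum_le_sum
          intro i _
          rw [Real.norm_eq_abs]
          exact pow_le_pow_left₀ (abs_nonneg _) (hm i (Finset.mem_univ i)) 2
      _ = N * |v m| ^ 2 := by simp [mul_comm]
  calc Real.sqrt (∑ i : Fin N, ‖v i‖ ^ 2) ≤ Real.sqrt (N * |v m| ^ 2) :=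
        Real.sqrt_le_sqrt h1
    _ = Real.sqrt N * |v m| := by
        rw [Real.sqrt_mul (Nat.cast_nonneg N), Real.sqrt_sq_eq_abs, abs_abs]

/-- (Schmalz's lemma, quantitative core.)  For `r` of class `C²` on a
neighborhood of a compact set `K ⊂ ℝ^N` there is `c > 0` such that for every `y ∈ K`
some partial derivative `∂r/∂x_m` satisfies `|∂r/∂x_m(x)| ≥ |∇r(y)|/(2√N)` for all
`x ∈ K` with `|x − y| ≤ c|∇r(y)|`; in particular `|∇r(x)| ≥ |∇r(y)|/(2√N)` there. -/
theorem schmalz_anisotropic_ball_partial_lower_bound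
    (N : ℕ) (hN : 0 < N)
    (K W : Set (EuclideanSpace ℝ (Fin N))) (hK : IsCompact K)
    (hW : IsOpen W) (hKW : K ⊆ W)
    (r : EuclideanSpace ℝ (Fin N) → ℝ) (hr : ContDiffOn ℝ 2 r W) :
    ∃ c : ℝ, 0 < c ∧ ∀ y ∈ K, ∃ m : Fin N, ∀ x ∈ K,
      ‖x - y‖ ≤ c * ‖fderiv ℝ r y‖ →
        ‖fderiv ℝ r y‖ / (2 * Real.sqrt N)
            ≤ |fderiv ℝ r x (EuclideanSpace.single m 1)| ∧
          ‖fderiv ℝ r y‖ / (2 * Real.sqrt N) ≤ ‖fderiv ℝ r x‖ := by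
  set g := fderiv ℝ r with hgdef
  have hsN : 0 < Real.sqrt N := Real.sqrt_pos.mpr (by exact_mod_cast hN)
  have hg : ContDiffOn ℝ 1 g W := hr.fderiv_of_isOpen hW (by norm_num)
  obtain ⟨δ, hδ, hTW⟩ := hK.exists_cthickening_subset_open hW hKW
  set T := Metric.cthickening δ K with hT
  have hTc : IsCompact T := hK.cthickening
  have hgd : ContinuousOn (fderiv ℝ g) W := hg.continuousOn_fderiv_of_isOpen hW le_rfl
  obtain ⟨L, hL⟩ := hTc.exists_bound_of_continuousOn (f := fderiv ℝ g) (hgd.mono hTW)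
  obtain ⟨M, hM⟩ := hK.exists_bound_of_continuousOn ((hg.continuousOn).mono hKW)
  set L' := max L 0 with hL'
  set M' := max M 0 with hM'
  have hL'0 : 0 ≤ L' := le_max_right _ _
  have hM'0 : 0 ≤ M' := le_max_right _ _
  set c := min (δ / (M' + 1)) (1 / (2 * Real.sqrt N * (L' + 1))) with hc
  have hc0 : 0 < c := by
    apply lt_min
    · positivity
    · positivity
  refine ⟨c, hc0, ?_⟩
  intro y hy
  obtain ⟨m, hm⟩ := schmalz_exists_index N hN (g y)
  refine ⟨m, ?_⟩
  intro x hx hxy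
  have hgy0 : 0 ≤ ‖g y‖ := norm_nonneg _
  have hgyM : ‖g y‖ ≤ M' := le_trans (hM y hy) (le_max_left _ _)
  -- ‖x - y‖ ≤ δ
  have hxyδ : ‖x - y‖ ≤ δ := by
    have : c * ‖g y‖ ≤ (δ / (M' + 1)) * (M' + 1) := by
      apply mul_le_mul (min_le_left _ _) (by linarith) hgy0 (by positivity)
    rw [div_mul_cancel₀ _ (by positivity : (M' + 1) ≠ 0)] at this
    linarith
  -- the segment from y to x lies in T
  have hseg : segment ℝ y x ⊆ T := by
    have h1 : segment ℝ y x ⊆ Metric.closedBall y δ := by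
      apply (convex_closedBall y δ).segment_subset
      · exact Metric.mem_closedBall_self hδ.le
      · simp [Metric.mem_closedBall, dist_eq_norm, hxyδ]
    exact h1.trans (Metric.closedBall_subset_cthickening hy δ)
  have hsegW : segment ℝ y x ⊆ W := hseg.trans hTW
  -- Lipschitz estimate on the segment
  have hlip : ‖g x - g y‖ ≤ L' * ‖x - y‖ := by
    apply Convex.norm_image_sub_le_of_norm_hasFDerivWithin_le
      (f' := fun z => fderiv ℝ g z) (s := segment ℝ y x)
    · intro z hz
      have hzW : z ∈ W := hsegW hz
      have : DifferentiableAt ℝ g z :=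
        (hg.differentiableOn one_ne_zero).differentiableAt (hW.mem_nhds hzW)
      exact this.hasFDerivAt.hasFDerivWithinAt
    · intro z hz
      exact le_trans (hL z (hseg hz)) (le_max_left _ _)
    · exact convex_segment y x
    · exact left_mem_segment ℝ y x
    · exact right_mem_segment ℝ y x
  -- ‖g x - g y‖ ≤ ‖g y‖ / (2 √N)
  have hkey : ‖g x - g y‖ ≤ ‖g y‖ / (2 * Real.sqrt N) := by
    have h2 : ‖g x - g y‖ ≤ L' * (c * ‖g y‖) :=
      le_trans hlip (by apply mul_le_mul_of_nonneg_left hxy hL'0)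
    have h3 : c ≤ 1 / (2 * Real.sqrt N * (L' + 1)) := min_le_right _ _
    have h4 : L' * (c * ‖g y‖) ≤ L' * ((1 / (2 * Real.sqrt N * (L' + 1))) * ‖g y‖) := by
      apply mul_le_mul_of_nonneg_left (mul_le_mul_of_nonneg_right h3 hgy0) hL'0
    have h5 : L' * ((1 / (2 * Real.sqrt N * (L' + 1))) * ‖g y‖) ≤ ‖g y‖ / (2 * Real.sqrt N) := by
      have hden : (0:ℝ) < 2 * Real.sqrt N * (L' + 1) := by positivity
      have h2s : (0:ℝ) < 2 * Real.sqrt N := by positivity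
      rw [show L' * ((1 / (2 * Real.sqrt N * (L' + 1))) * ‖g y‖)
          = ‖g y‖ * L' / (2 * Real.sqrt N * (L' + 1)) by ring,
        div_le_div_iff₀ hden h2s]
      nlinarith
    linarith
  -- lower bound on partial at y
  have hmy : ‖g y‖ / Real.sqrt N ≤ |g y (EuclideanSpace.single m 1)| := by
    rw [div_le_iff₀ hsN]
    linarith [hm]
  -- conclude
  have hdiff : |g x (EuclideanSpace.single m 1) - g y (EuclideanSpace.single m 1)|
      ≤ ‖g y‖ / (2 * Real.sqrt N) := by
    have h1 : |(g x - g y) (EuclideanSpace.single m 1)|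
        ≤ ‖g x - g y‖ * ‖EuclideanSpace.single m (1:ℝ)‖ :=
      (g x - g y).le_opNorm _
    rw [EuclideanSpace.norm_single, norm_one, mul_one] at h1
    simpa using le_trans h1 hkey
  have hpart : ‖g y‖ / (2 * Real.sqrt N) ≤ |g x (EuclideanSpace.single m 1)| := by
    have habs := abs_sub_abs_le_abs_sub (g y (EuclideanSpace.single m 1))
      (g x (EuclideanSpace.single m 1))
    rw [abs_sub_comm] at habs
    have hhalf : ‖g y‖ / Real.sqrt N = 2 * (‖g y‖ / (2 * Real.sqrt N)) := by
      field_simp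
    linarith [hmy, hdiff, habs]
  refine ⟨hpart, le_trans hpart ?_⟩
  have h1 : |g x (EuclideanSpace.single m 1)| ≤ ‖g x‖ * ‖EuclideanSpace.single m (1:ℝ)‖ :=
    (g x).le_opNorm _
  rw [EuclideanSpace.norm_single, norm_one, mul_one] at h1
  exact h1
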